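/- If f : ℝ → ℝ is convex on an interval [a, b] and ν is a random variable taking values in [a, b] with mean m, then E[f(ν)] ≤ ((b - m)/(b - a))·f(a) + ((m - a)/(b - a))·f(b), with equality attained by the two-point distribution β·δ_a + (1-β)·δ_b with β = (b - m)/(b - a). -/

import Mathlib

open MeasureTheory

lemma em_pointwise (f : ℝ → ℝ) (a b : ℝ) (hab : a < b)
    (hconv : ConvexOn ℝ (Set.Icc a b) f) {x : ℝ} (hx : x ∈ Set.Icc a b) :
    f x ≤ (b - x) / (b - a) * f a + (x - a) / (b - a) * f b := by
  have hba : (0:ℝ) < b - a := by linarith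
  have ht : (0:ℝ) ≤ (b - x) / (b - a) := by
    apply div_nonneg <;> linarith [hx.2]
  have hs : (0:ℝ) ≤ (x - a) / (b - a) := by
    apply div_nonneg <;> linarith [hx.1]
  have hts : (b - x) / (b - a) + (x - a) / (b - a) = 1 := by
    field_simp
    ring
  have hxeq : ((b - x) / (b - a)) • a + ((x - a) / (b - a)) • b = x := by
    rw [smul_eq_mul, smul_eq_mul, div_mul_eq_mul_div, div_mul_eq_mul_div, ← add_div,
      div_eq_iff hba.ne']
    ring
  have := hconv.2 (Set.left_mem_Icc.2 hab.le) (Set.right_mem_Icc.2 hab.le) ht hs hts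
  rw [hxeq] at this
  simpa using this

/-- Edmundson–Madansky inequality: for `f` convex on `[a,b]` and a random variable with
values in `[a,b]` and mean `m`, `E[f(ν)] ≤ ((b-m)/(b-a)) f(a) + ((m-a)/(b-a)) f(b)`,
with equality attained by the two-point distribution `β δ_a + (1-β) δ_b`,
`β = (b-m)/(b-a)`. -/
theorem edmundson_madansky
    (f : ℝ → ℝ) (a b m : ℝ) (hab : a < b) (ham : a ≤ m) (hmb : m ≤ b)
    (hconv : ConvexOn ℝ (Set.Icc a b) f)
    (μ : Measure ℝ) [IsProbabilityMeasure μ]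
    (hsupp : ∀ᵐ ν ∂μ, ν ∈ Set.Icc a b)
    (hf : Integrable f μ) (hν : Integrable (fun ν => ν) μ)
    (hmean : (∫ ν, ν ∂μ) = m) :
    (∫ ν, f ν ∂μ) ≤ (b - m) / (b - a) * f a + (m - a) / (b - a) * f b ∧
      (let β : ℝ := (b - m) / (b - a)
       let μ₂ : Measure ℝ :=
         ENNReal.ofReal β • Measure.dirac a + ENNReal.ofReal (1 - β) • Measure.dirac b
       (∫ ν, ν ∂μ₂) = m ∧
         (∫ ν, f ν ∂μ₂) = (b - m) / (b - a) * f a + (m - a) / (b - a) * f b) := by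
  have hba : (0:ℝ) < b - a := by linarith
  constructor
  · -- inequality
    have hg : Integrable (fun x => (b - x) / (b - a) * f a + (x - a) / (b - a) * f b) μ := by
      apply Integrable.add
      · simpa [div_mul_eq_mul_div, sub_mul] using
          ((integrable_const (b * f a)).sub (hν.mul_const (f a))).div_const (b - a)
      · simpa [div_mul_eq_mul_div, sub_mul] using
          ((hν.mul_const (f b)).sub (integrable_const (a * f b))).div_const (b - a)
    have hle : (∫ ν, f ν ∂μ) ≤
        ∫ x, ((b - x) / (b - a) * f a + (x - a) / (b - a) * f b) ∂μ := by
      apply integral_mono_ae hf hg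
      filter_upwards [hsupp] with x hx
      exact em_pointwise f a b hab hconv hx
    calc (∫ ν, f ν ∂μ) ≤ _ := hle
      _ = (b - m) / (b - a) * f a + (m - a) / (b - a) * f b := by
        have : (fun x => (b - x) / (b - a) * f a + (x - a) / (b - a) * f b)
            = fun x => (b * f a - a * f b) / (b - a) + x * ((f b - f a) / (b - a)) := by
          funext x; field_simp; ring
        rw [this, integral_add (integrable_const _) (hν.mul_const _),
          integral_const, integral_mul_const, hmean]
        simp
        field_simp
        ring
  · -- equality part
    intro β μ₂
    have hβ0 : 0 ≤ β := div_nonneg (by linarith) hba.le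
    have hβ1 : 1 - β = (m - a) / (b - a) := by
      show (1:ℝ) - (b - m) / (b - a) = (m - a) / (b - a)
      field_simp
      ring
    have hβ1' : 0 ≤ 1 - β := by rw [hβ1]; exact div_nonneg (by linarith) hba.le
    have key : ∀ g : ℝ → ℝ, (∫ ν, g ν ∂μ₂) = β * g a + (1 - β) * g b := by
      intro g
      have hd : ∀ c : ℝ, Integrable g (Measure.dirac c) := fun c =>
        (integrable_const (g c)).congr (ae_eq_dirac g).symm
      have h1 : Integrable g ((ENNReal.ofReal β) • Measure.dirac a) :=
        (hd a).smul_measure (by simp)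
      have h2 : Integrable g ((ENNReal.ofReal (1 - β)) • Measure.dirac b) :=
        (hd b).smul_measure (by simp)
      rw [show μ₂ = _ + _ from rfl, integral_add_measure h1 h2,
        integral_smul_measure, integral_smul_measure, integral_dirac, integral_dirac,
        ENNReal.toReal_ofReal hβ0, ENNReal.toReal_ofReal hβ1']
      simp [smul_eq_mul]
    constructor
    · have := key (fun x => x)
      rw [this, hβ1]
      show (b - m) / (b - a) * a + (m - a) / (b - a) * b = m
      field_simp; ring
    · rw [key f, hβ1]
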